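/- Let 0 < α < 1/2, b' < 0 and c > 0. Let ψ¹ : ℝ → ℝ be bounded and measurable with support contained in [−c,c], and let φ¹ : ℝ → ℝ be continuous and bounded. For a > 0 define I(a) := ∫_{{(x₁,x₂) : x₁ ≤ b'·x₂², |x₁| ≤ a·c}} a^{−(1+α)/2} · ψ¹(x₁/a) · φ¹(x₂/a^α) d(x₁,x₂). Then lim_{a→0⁺} a^{(α−2)/2} · √(−b') · I(a) = φ¹(0) · ∫_{{(x₁,x₂) ∈ ℝ² : x₁ ≤ −x₂²}} ψ¹(x₁) d(x₁,x₂). (Limit of the term I in the proof of Theorem 3.1, Part 2(b).) -/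

import Mathlib

open MeasureTheory Real Set

lemma aux_smul_prod (c : ENNReal) {α β : Type*} [MeasurableSpace α] [MeasurableSpace β]
    (μ : Measure α) [SFinite μ] (ν : Measure β) [SFinite ν] :
    (c • μ).prod ν = c • (μ.prod ν) := by
  ext s hs
  rw [Measure.prod_apply hs, MeasureTheory.lintegral_smul_measure, Measure.smul_apply,
    Measure.prod_apply hs, smul_eq_mul]

lemma aux_prod_smul (c : ENNReal) {α β : Type*} [MeasurableSpace α] [MeasurableSpace β]
    (μ : Measure α) [SFinite μ] (ν : Measure β) [SFinite ν] :
    μ.prod (c • ν) = c • (μ.prod ν) := by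
  ext s hs
  rw [Measure.prod_apply hs, Measure.smul_apply, Measure.prod_apply hs, smul_eq_mul,
    ← MeasureTheory.lintegral_const_mul _ (measurable_measure_prodMk_left hs)]
  simp only [Measure.smul_apply, smul_eq_mul]

lemma aux_map_scale {p q : ℝ} (hp : p ≠ 0) (hq : q ≠ 0) :
    Measure.map (fun y : ℝ × ℝ => (p * y.1, q * y.2)) volume
      = (ENNReal.ofReal |p⁻¹| * ENNReal.ofReal |q⁻¹|) • volume := by
  have h0 : (fun y : ℝ × ℝ => (p * y.1, q * y.2)) = Prod.map (p * ·) (q * ·) := rfl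
  rw [h0, Measure.volume_eq_prod ℝ ℝ,
    ← Measure.map_prod_map _ _ (measurable_const_mul p) (measurable_const_mul q),
    Real.map_volume_mul_left hp, Real.map_volume_mul_left hq,
    aux_smul_prod, aux_prod_smul, smul_smul, ← Measure.volume_eq_prod ℝ ℝ, mul_comm]

lemma aux_integral_scale {p q : ℝ} (hp : 0 < p) (hq : 0 < q) (f : ℝ × ℝ → ℝ)
    (hf : Measurable f) :
    ∫ x, f x = (p * q) * ∫ y : ℝ × ℝ, f (p * y.1, q * y.2) := by
  have hT : Measurable (fun y : ℝ × ℝ => (p * y.1, q * y.2)) := by fun_prop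
  have h1 : ∫ y : ℝ × ℝ, f (p * y.1, q * y.2)
      = ∫ x, f x ∂(Measure.map (fun y : ℝ × ℝ => (p * y.1, q * y.2)) volume) :=
    (integral_map hT.aemeasurable hf.aestronglyMeasurable).symm
  rw [h1, aux_map_scale hp.ne' hq.ne', integral_smul_measure, ENNReal.toReal_mul,
    ENNReal.toReal_ofReal (abs_nonneg _), ENNReal.toReal_ofReal (abs_nonneg _),
    abs_of_pos (inv_pos.2 hp), abs_of_pos (inv_pos.2 hq), smul_eq_mul]
  field_simp

/-- **Limit of the term I in Theorem 3.1, Part 2(b).** For `0 < α < 1/2` and `b' < 0`,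
`a^{(α-2)/2} √(-b') I(a) → φ¹(0) ∫_{x₁ ≤ -x₂²} ψ¹(x₁)` as `a → 0⁺`. -/
theorem limit_term_I
    (α : ℝ) (hα : 0 < α ∧ α < 1 / 2)
    (b' : ℝ) (hb' : b' < 0) (c : ℝ) (hc : 0 < c)
    (ψ1 : ℝ → ℝ) (Cψ : ℝ) (hψ1_bdd : ∀ x, |ψ1 x| ≤ Cψ) (hψ1_meas : Measurable ψ1)
    (hψ1_supp : Function.support ψ1 ⊆ Icc (-c) c)
    (φ1 : ℝ → ℝ) (hφ1_cont : Continuous φ1) (Cφ : ℝ) (hφ1_bdd : ∀ x, |φ1 x| ≤ Cφ) :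
    Filter.Tendsto
      (fun a : ℝ =>
        a ^ ((α - 2) / 2) * Real.sqrt (-b') *
          ∫ x in {x : ℝ × ℝ | x.1 ≤ b' * x.2 ^ 2 ∧ |x.1| ≤ a * c},
            a ^ (-(1 + α) / 2) * ψ1 (x.1 / a) * φ1 (x.2 / a ^ α))
      (nhdsWithin 0 (Ioi 0))
      (nhds (φ1 0 * ∫ x in {x : ℝ × ℝ | x.1 ≤ -x.2 ^ 2}, ψ1 x.1)) := by
  obtain ⟨hα0, hα2⟩ := hα
  have hb : (0:ℝ) < -b' := neg_pos.2 hb'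
  have hsb : (0:ℝ) < Real.sqrt (-b') := Real.sqrt_pos.2 hb
  have hCψ : 0 ≤ Cψ := (abs_nonneg _).trans (hψ1_bdd 0)
  have hCφ : 0 ≤ Cφ := (abs_nonneg _).trans (hφ1_bdd 0)
  set Sc : Set (ℝ × ℝ) := {y : ℝ × ℝ | y.1 ≤ -y.2 ^ 2 ∧ |y.1| ≤ c} with hSc_def
  have hSinf_m : MeasurableSet {x : ℝ × ℝ | x.1 ≤ -x.2 ^ 2} :=
    measurableSet_le measurable_fst (by fun_prop)
  have hSc_m : MeasurableSet Sc := by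
    apply MeasurableSet.inter hSinf_m
    exact measurableSet_le measurable_fst.abs measurable_const
  set G : ℝ → ℝ × ℝ → ℝ := fun a y =>
    Sc.indicator (fun y => ψ1 y.1 * φ1 (Real.sqrt (a / -b') / a ^ α * y.2)) y with hG_def
  set G0 : ℝ × ℝ → ℝ := Sc.indicator (fun y => ψ1 y.1 * φ1 0) with hG0_def
  set rect : Set (ℝ × ℝ) := Icc (-c) 0 ×ˢ Icc (-(Real.sqrt c)) (Real.sqrt c) with hrect_def
  have hrect_m : MeasurableSet rect := measurableSet_Icc.prod measurableSet_Icc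
  set bnd : ℝ × ℝ → ℝ := rect.indicator (fun _ => Cψ * Cφ) with hbnd_def
  have hbnd_nonneg : ∀ y, 0 ≤ bnd y :=
    fun y => Set.indicator_nonneg (fun _ _ => mul_nonneg hCψ hCφ) y
  have hbnd_int : Integrable bnd := by
    rw [hbnd_def, integrable_indicator_iff hrect_m]
    exact integrableOn_const (isCompact_Icc.prod isCompact_Icc).measure_lt_top.ne
  -- measurability of G a
  have hG_meas : ∀ a : ℝ, AEStronglyMeasurable (G a) volume := by
    intro a
    refine (Measurable.indicator ?_ hSc_m).aestronglyMeasurable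
    exact (hψ1_meas.comp measurable_fst).mul
      (hφ1_cont.measurable.comp (measurable_snd.const_mul _))
  -- the domination
  have hG_bound : ∀ a : ℝ, ∀ y, ‖G a y‖ ≤ bnd y := by
    intro a y
    by_cases hy : y ∈ Sc
    · rw [hG_def]
      simp only [Set.indicator_of_mem hy]
      by_cases hz : ψ1 y.1 = 0
      · simp only [hz, zero_mul, norm_zero]; exact hbnd_nonneg y
      · have h1 : y.1 ∈ Icc (-c) c := hψ1_supp (Function.mem_support.2 hz)
        have hy1 : y.1 ≤ -y.2 ^ 2 := hy.1
        have h2 : y.2 ^ 2 ≤ c := by nlinarith [h1.1, h1.2]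
        have h3 : |y.2| ≤ Real.sqrt c := by
          rw [← Real.sqrt_sq_eq_abs]
          exact Real.sqrt_le_sqrt h2
        have hmem : y ∈ rect := by
          refine ⟨⟨h1.1, ?_⟩, (abs_le.1 h3).1, (abs_le.1 h3).2⟩
          nlinarith [sq_nonneg y.2]
        rw [hbnd_def]
        simp only [Set.indicator_of_mem hmem]
        rw [Real.norm_eq_abs, abs_mul]
        exact mul_le_mul (hψ1_bdd _) (hφ1_bdd _) (abs_nonneg _) hCψ
    · rw [hG_def]
      simp only [Set.indicator_of_notMem hy, norm_zero]
      exact hbnd_nonneg y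
  -- pointwise limit
  have hτ : Filter.Tendsto (fun a : ℝ => Real.sqrt (a / -b') / a ^ α)
      (nhdsWithin 0 (Ioi 0)) (nhds 0) := by
    have h1 : Filter.Tendsto (fun a : ℝ => a ^ (1/2 - α)) (nhdsWithin 0 (Ioi 0)) (nhds 0) := by
      have hc1 : ContinuousAt (fun a : ℝ => a ^ (1/2 - α)) 0 :=
        Real.continuousAt_rpow_const 0 (1/2 - α) (Or.inr (by linarith))
      have := hc1.tendsto.mono_left (nhdsWithin_le_nhds (s := Ioi (0:ℝ)))
      rwa [Real.zero_rpow (by intro h; nlinarith : (1:ℝ)/2 - α ≠ 0)] at this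
    have h2 : Filter.Tendsto (fun a : ℝ => a ^ (1/2 - α) * (Real.sqrt (-b'))⁻¹)
        (nhdsWithin 0 (Ioi 0)) (nhds 0) := by
      have := h1.mul_const (Real.sqrt (-b'))⁻¹
      rwa [zero_mul] at this
    refine h2.congr' ?_
    filter_upwards [self_mem_nhdsWithin] with a (ha : 0 < a)
    rw [Real.sqrt_div ha.le, Real.sqrt_eq_rpow, Real.rpow_sub ha]
    field_simp
    rw [Real.sqrt_eq_rpow]
  have hG_lim : ∀ y, Filter.Tendsto (fun a => G a y) (nhdsWithin 0 (Ioi 0)) (nhds (G0 y)) := by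
    intro y
    by_cases hy : y ∈ Sc
    · rw [hG_def, hG0_def]
      simp only [Set.indicator_of_mem hy]
      refine Filter.Tendsto.const_mul _ ?_
      refine (hφ1_cont.tendsto 0).comp ?_
      have := hτ.mul_const y.2
      rwa [zero_mul] at this
    · rw [hG_def, hG0_def]
      simp only [Set.indicator_of_notMem hy]
      exact tendsto_const_nhds
  -- dominated convergence
  have hmain : Filter.Tendsto (fun a => ∫ y, G a y) (nhdsWithin 0 (Ioi 0))
      (nhds (∫ y, G0 y)) :=
    tendsto_integral_filter_of_dominated_convergence bnd
      (Filter.Eventually.of_forall hG_meas)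
      (Filter.Eventually.of_forall fun a => Filter.Eventually.of_forall (hG_bound a))
      hbnd_int
      (Filter.Eventually.of_forall hG_lim)
  -- identify the limit
  have hG0_eq : ∫ y, G0 y = φ1 0 * ∫ x in {x : ℝ × ℝ | x.1 ≤ -x.2 ^ 2}, ψ1 x.1 := by
    have heq : G0 = ({x : ℝ × ℝ | x.1 ≤ -x.2 ^ 2}).indicator (fun y => φ1 0 * ψ1 y.1) := by
      funext y
      by_cases hy : y ∈ Sc
      · have hy2 : y ∈ {x : ℝ × ℝ | x.1 ≤ -x.2 ^ 2} := hy.1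
        rw [hG0_def, Set.indicator_of_mem hy, Set.indicator_of_mem hy2, mul_comm]
      · rw [hG0_def, Set.indicator_of_notMem hy]
        by_cases hy2 : y ∈ {x : ℝ × ℝ | x.1 ≤ -x.2 ^ 2}
        · rw [Set.indicator_of_mem hy2]
          have hz : ψ1 y.1 = 0 := by
            by_contra h
            have h1 := hψ1_supp (Function.mem_support.2 h)
            exact hy ⟨hy2, abs_le.2 ⟨h1.1, h1.2⟩⟩
          rw [hz, mul_zero]
        · rw [Set.indicator_of_notMem hy2]
    rw [heq, integral_indicator hSinf_m, integral_const_mul]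
  rw [← hG0_eq]
  refine hmain.congr' ?_
  -- the key change of variables
  filter_upwards [self_mem_nhdsWithin] with a (ha : 0 < a)
  set s : ℝ := Real.sqrt (a / -b') with hs_def
  have hs : 0 < s := Real.sqrt_pos.2 (div_pos ha hb)
  have hs2 : s ^ 2 = a / -b' := Real.sq_sqrt (div_pos ha hb).le
  have hbs2 : ∀ z : ℝ, b' * (s * z) ^ 2 = a * -(z ^ 2) := by
    intro z
    rw [mul_pow, hs2]
    field_simp
    rw [mul_div_cancel_left₀ _ hb'.ne]
  set Ta : Set (ℝ × ℝ) := {x : ℝ × ℝ | x.1 ≤ b' * x.2 ^ 2 ∧ |x.1| ≤ a * c} with hTa_def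
  have hTa_m : MeasurableSet Ta := by
    apply MeasurableSet.inter
    · exact measurableSet_le measurable_fst (by fun_prop)
    · exact measurableSet_le measurable_fst.abs measurable_const
  set F : ℝ × ℝ → ℝ := fun x => ψ1 (x.1 / a) * φ1 (x.2 / a ^ α) with hF_def
  have hF_m : Measurable F :=
    (hψ1_meas.comp (measurable_fst.div_const a)).mul
      (hφ1_cont.measurable.comp (measurable_snd.div_const _))
  have stepA : ∫ x in Ta, a ^ (-(1 + α) / 2) * ψ1 (x.1 / a) * φ1 (x.2 / a ^ α)
      = a ^ (-(1 + α) / 2) * ∫ x in Ta, F x := by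
    rw [hF_def, ← integral_const_mul]
    congr 1
    funext x
    ring
  have stepB : ∫ x in Ta, F x = ∫ x, Ta.indicator F x := (integral_indicator hTa_m).symm
  have stepC : ∫ x, Ta.indicator F x
      = (a * s) * ∫ y : ℝ × ℝ, Ta.indicator F (a * y.1, s * y.2) :=
    aux_integral_scale ha hs _ (hF_m.indicator hTa_m)
  have stepD : ∀ y : ℝ × ℝ, Ta.indicator F (a * y.1, s * y.2) = G a y := by
    intro y
    have hmem : ((a * y.1, s * y.2) : ℝ × ℝ) ∈ Ta ↔ y ∈ Sc := by
      rw [hTa_def, hSc_def]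
      simp only [mem_setOf_eq]
      apply and_congr
      · rw [hbs2 y.2]
        exact mul_le_mul_iff_right₀ ha
      · rw [abs_mul, abs_of_pos ha]
        exact mul_le_mul_iff_right₀ ha
    by_cases hy : y ∈ Sc
    · rw [Set.indicator_of_mem (hmem.2 hy), hG_def]
      simp only [Set.indicator_of_mem hy]
      rw [hF_def]
      simp only
      rw [mul_div_cancel_left₀ _ ha.ne', ← hs_def,
        show s * y.2 / a ^ α = s / a ^ α * y.2 from by ring]
    · rw [Set.indicator_of_notMem (fun h => hy (hmem.1 h)), hG_def]
      simp only [Set.indicator_of_notMem hy]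
  have hconst : a ^ ((α - 2) / 2) * Real.sqrt (-b') * (a ^ (-(1 + α) / 2) * (a * s)) = 1 := by
    have hs_eq : s = a ^ ((1:ℝ)/2) * (Real.sqrt (-b'))⁻¹ := by
      rw [hs_def, Real.sqrt_div ha.le, Real.sqrt_eq_rpow, div_eq_mul_inv]
    rw [hs_eq,
      show a ^ ((α - 2) / 2) * Real.sqrt (-b') *
          (a ^ (-(1 + α) / 2) * (a * (a ^ ((1:ℝ)/2) * (Real.sqrt (-b'))⁻¹)))
        = (Real.sqrt (-b') * (Real.sqrt (-b'))⁻¹) *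
          (a ^ ((α - 2) / 2) * a ^ (-(1 + α) / 2) * (a ^ (1:ℝ) * a ^ ((1:ℝ)/2)))
        from by rw [Real.rpow_one]; ring,
      mul_inv_cancel₀ hsb.ne', one_mul, ← Real.rpow_add ha, ← Real.rpow_add ha,
      ← Real.rpow_add ha, show (α - 2) / 2 + -(1 + α) / 2 + ((1:ℝ) + (1:ℝ)/2) = 0 from by ring,
      Real.rpow_zero]
  calc ∫ y, G a y = ∫ y : ℝ × ℝ, Ta.indicator F (a * y.1, s * y.2) := by
        simp_rw [stepD]
    _ = a ^ ((α - 2) / 2) * Real.sqrt (-b') *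
          ∫ x in Ta, a ^ (-(1 + α) / 2) * ψ1 (x.1 / a) * φ1 (x.2 / a ^ α) := by
        rw [stepA, stepB, stepC]
        rw [show a ^ ((α - 2) / 2) * Real.sqrt (-b') *
            (a ^ (-(1 + α) / 2) * ((a * s) * ∫ y : ℝ × ℝ, Ta.indicator F (a * y.1, s * y.2)))
          = (a ^ ((α - 2) / 2) * Real.sqrt (-b') * (a ^ (-(1 + α) / 2) * (a * s))) *
            ∫ y : ℝ × ℝ, Ta.indicator F (a * y.1, s * y.2) from by ring, hconst, one_mul]
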